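/- Let (B, ω) be a compact symplectic manifold admitting a nontrivial Hofer displacement energy (e(B') > 0 for every closed ball B' embedded in B). Fix t ∈ (0,1]. Let φ_{F_i} be a sequence of Hamiltonian isotopies such that the time-t maps φ^t_{F_i} converge uniformly to a homeomorphism ψ_t, and let F be a smooth Hamiltonian with ‖F_i # F̄‖_Hofer → 0, where F_i # F̄ generates (φ_F)^{-1} ∘ φ_{F_i}. Then ψ_t = φ^t_F. Equivalently: if ψ_t ≠ φ^t_F, there is a small ball displaced by (φ^t_F)^{-1} ∘ φ^t_{F_i} for large i, contradicting the energy–capacity inequality 0 < e(ball) ≤ ‖F_i # F̄‖_Hofer → 0. -/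
import Mathlib


open Filter

/-- (Oh–Müller / Proposition 5.1, abstract form.)  Let `B` be a
compact (symplectic) manifold with a nontrivial Hofer displacement energy `e`:
`e A > 0` for every set `A` with nonempty interior.  Let `φF` be the time-`t`
map `φ^t_F` of the Hamiltonian flow of `F`, let `Φ i = φ^t_{F_i}` be the
time-`t` maps of a sequence of Hamiltonian isotopies converging uniformly to a
homeomorphism `ψ`, and let `ν i = ‖F_i # F̄‖_Hofer → 0` dominate the
displacement energy of any set displaced by `(φ^t_F)⁻¹ ∘ φ^t_{F_i}` (the
energy–capacity inequality).  Then `ψ = φ^t_F`. -/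
theorem uniqueness_of_limit_hamiltonian
    {B : Type*} [MetricSpace B] [CompactSpace B] [Nonempty B]
    (φF : Homeomorph B B)
    (Φ : ℕ → B → B) (hΦ : ∀ i, Continuous (Φ i))
    (ψ : B → B) (hψ : Continuous ψ)
    (hconv : TendstoUniformly Φ ψ atTop)
    (e : Set B → ℝ) (ν : ℕ → ℝ)
    (he_pos : ∀ A : Set B, (interior A).Nonempty → 0 < e A)
    (hec : ∀ i (A : Set B), ((φF.symm ∘ Φ i) '' A) ∩ A = ∅ → e A ≤ ν i)
    (hν : Tendsto ν atTop (nhds 0)) :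
    ψ = ⇑φF := by
  by_contra hne
  obtain ⟨x, hx⟩ : ∃ x, ψ x ≠ φF x := by
    by_contra h
    push_neg at h
    exact hne (funext h)
  set g : B → B := φF.symm ∘ ψ with hg
  have hgx : g x ≠ x := by
    intro h
    apply hx
    have := congrArg φF h
    simpa [hg, Function.comp] using this
  set δ : ℝ := dist (g x) x with hδ
  have hδpos : 0 < δ := dist_pos.mpr hgx
  have hgcont : Continuous g := φF.symm.continuous.comp hψ
  -- choose a small radius r ≤ δ/4 so that g moves ball x r close to g x
  obtain ⟨r, hrpos, hrle, hr⟩ :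
      ∃ r, 0 < r ∧ r ≤ δ / 4 ∧ ∀ y, dist y x < r → dist (g y) (g x) < δ / 4 := by
    obtain ⟨r₀, hr₀, h⟩ := Metric.continuous_iff.mp hgcont x (δ / 4) (by linarith)
    exact ⟨min r₀ (δ / 4), lt_min hr₀ (by linarith), min_le_right _ _,
      fun y hy => h y (lt_of_lt_of_le hy (min_le_left _ _))⟩
  set A : Set B := Metric.ball x r with hA
  have heA : 0 < e A := he_pos A ⟨x, by
    rw [hA, interior_eq_iff_isOpen.mpr Metric.isOpen_ball]
    exact Metric.mem_ball_self hrpos⟩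
  -- uniform convergence of φF.symm ∘ Φ i to g
  have hunif : TendstoUniformly (fun i => φF.symm ∘ Φ i) g atTop := by
    have hUC : UniformContinuous (φF.symm : B → B) :=
      CompactSpace.uniformContinuous_of_continuous φF.symm.continuous
    exact hUC.comp_tendstoUniformly hconv
  have hev : ∀ᶠ i in atTop, e A ≤ ν i := by
    have hclose := Metric.tendstoUniformly_iff.mp hunif (δ / 4) (by linarith)
    filter_upwards [hclose] with i hi
    apply hec i A
    rw [Set.eq_empty_iff_forall_notMem]
    rintro z ⟨⟨y, hyA, rfl⟩, hzA⟩
    -- y ∈ ball x r and φF.symm (Φ i y) ∈ ball x r : contradiction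
    have hy : dist y x < r := Metric.mem_ball.mp hyA
    have h1 : dist (g y) (g x) < δ / 4 := hr y hy
    have h2 : dist (g y) ((φF.symm ∘ Φ i) y) < δ / 4 := hi y
    have h3 : dist ((φF.symm ∘ Φ i) y) x < r := Metric.mem_ball.mp hzA
    have htri : δ ≤ dist (g x) (g y) + dist (g y) ((φF.symm ∘ Φ i) y)
        + dist ((φF.symm ∘ Φ i) y) x := by
      calc δ = dist (g x) x := hδ
        _ ≤ dist (g x) ((φF.symm ∘ Φ i) y) + dist ((φF.symm ∘ Φ i) y) x :=
          dist_triangle _ _ _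
        _ ≤ (dist (g x) (g y) + dist (g y) ((φF.symm ∘ Φ i) y))
            + dist ((φF.symm ∘ Φ i) y) x := by
          gcongr
          exact dist_triangle _ _ _
    rw [dist_comm (g x) (g y)] at htri
    linarith
  have : e A ≤ 0 := ge_of_tendsto hν hev
  linarith
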